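/- arXiv:2505.04543 — 7 statements merged into one kernel-verified Lean document; each statement's English description precedes it below -/
import Mathlib

section
/- For every graph G of maximum degree Δ and every integer h ≥ 1, there exists a proper (h+1)Δ+1-colouring σ of G such that every vertex v has at least min(h, deg(v)) neighbours whose colour under σ appears exactly once in the neighbourhood of v. -/
open Finset

lemma pcf_key {V : Type*} [Fintype V] [DecidableEq V] (G : SimpleGraph V) [DecidableRel G.Adj]
    (Δ h : ℕ) (hΔ : ∀ v, G.degree v ≤ Δ) (C : Finset V) :
    ∃ (σ : V → Fin ((h + 1) * Δ + 1)) (W : V → Finset V),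
      (∀ u ∈ C, ∀ w ∈ C, G.Adj u w → σ u ≠ σ w) ∧
      (∀ u, W u ⊆ G.neighborFinset u ∩ C) ∧
      (∀ u, (W u).card = min h ((G.neighborFinset u ∩ C).card)) ∧
      (∀ u, ∀ w ∈ W u, ∀ x ∈ G.neighborFinset u ∩ C, σ x = σ w → x = w) := by
  classical
  have hdeg : ∀ v, (G.neighborFinset v).card ≤ Δ := by
    intro v; rw [G.card_neighborFinset_eq_degree]; exact hΔ v
  induction C using Finset.induction_on with
  | empty =>
      refine ⟨fun _ => ⟨0, by omega⟩, fun _ => ∅, ?_, ?_, ?_, ?_⟩ <;> simp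
  | @insert a C ha ih =>
      obtain ⟨σ, W, hprop, hsub, hcard, huniq⟩ := ih
      set F : Finset (Fin ((h + 1) * Δ + 1)) :=
        ((G.neighborFinset a ∩ C).image σ) ∪
          (G.neighborFinset a).biUnion (fun u => (W u).image σ) with hF
      have hFcard : F.card < (h + 1) * Δ + 1 := by
        have h1 : ((G.neighborFinset a ∩ C).image σ).card ≤ Δ := by
          calc ((G.neighborFinset a ∩ C).image σ).card
              ≤ (G.neighborFinset a ∩ C).card := Finset.card_image_le
            _ ≤ (G.neighborFinset a).card := Finset.card_le_card (Finset.inter_subset_left)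
            _ ≤ Δ := hdeg a
        have h2 : ((G.neighborFinset a).biUnion (fun u => (W u).image σ)).card ≤ Δ * h := by
          calc ((G.neighborFinset a).biUnion (fun u => (W u).image σ)).card
              ≤ ∑ u ∈ G.neighborFinset a, ((W u).image σ).card := Finset.card_biUnion_le
            _ ≤ ∑ u ∈ G.neighborFinset a, h := by
                refine Finset.sum_le_sum fun u _ => ?_
                calc ((W u).image σ).card ≤ (W u).card := Finset.card_image_le
                  _ ≤ h := by rw [hcard u]; exact min_le_left _ _
            _ = (G.neighborFinset a).card * h := by rw [Finset.sum_const, smul_eq_mul]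
            _ ≤ Δ * h := Nat.mul_le_mul_right _ (hdeg a)
        calc F.card ≤ _ + _ := Finset.card_union_le _ _
          _ ≤ Δ + Δ * h := Nat.add_le_add h1 h2
          _ < (h + 1) * Δ + 1 := by ring_nf; omega
      have hex : ∃ c : Fin ((h + 1) * Δ + 1), c ∉ F := by
        by_contra hcon
        push_neg at hcon
        have hsub2 : (Finset.univ : Finset (Fin ((h + 1) * Δ + 1))) ⊆ F := fun c _ => hcon c
        have := Finset.card_le_card hsub2
        simp [Finset.card_univ] at this
        omega
      obtain ⟨c, hc⟩ := hex
      set σ' : V → Fin ((h + 1) * Δ + 1) := Function.update σ a c with hσ'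
      set W' : V → Finset V :=
        fun u => if u ∈ G.neighborFinset a ∧ (W u).card < h then insert a (W u) else W u with hW'
      have hW'def : ∀ u, W' u =
          if u ∈ G.neighborFinset a ∧ (W u).card < h then insert a (W u) else W u :=
        fun u => rfl
      have hσ'a : σ' a = c := Function.update_self _ _ _
      have hσ'ne : ∀ x, x ≠ a → σ' x = σ x := fun x hx => Function.update_of_ne hx _ _
      have hσ'C : ∀ x ∈ C, σ' x = σ x := fun x hx => hσ'ne x (fun e => ha (e ▸ hx))
      have hint : ∀ u, u ∉ G.neighborFinset a →
          G.neighborFinset u ∩ insert a C = G.neighborFinset u ∩ C := by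
        intro u hu
        ext x
        simp only [Finset.mem_inter, Finset.mem_insert]
        constructor
        · rintro ⟨hx, rfl | hx2⟩
          · exact absurd ((G.mem_neighborFinset _ _).2 ((G.mem_neighborFinset _ _).1 hx).symm) hu
          · exact ⟨hx, hx2⟩
        · exact fun ⟨hx, hx2⟩ => ⟨hx, Or.inr hx2⟩
      have hint2 : ∀ u, u ∈ G.neighborFinset a →
          G.neighborFinset u ∩ insert a C = insert a (G.neighborFinset u ∩ C) := by
        intro u hu
        ext x
        have hau : a ∈ G.neighborFinset u :=
          (G.mem_neighborFinset _ _).2 ((G.mem_neighborFinset _ _).1 hu).symm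
        simp only [Finset.mem_inter, Finset.mem_insert]
        constructor
        · rintro ⟨hx, rfl | hx2⟩
          · exact Or.inl rfl
          · exact Or.inr ⟨hx, hx2⟩
        · rintro (rfl | ⟨hx, hx2⟩)
          · exact ⟨hau, Or.inl rfl⟩
          · exact ⟨hx, Or.inr hx2⟩
      have haNC : ∀ u, a ∉ G.neighborFinset u ∩ C := fun u hx =>
        ha (Finset.mem_inter.1 hx).2
      have haW : ∀ u, a ∉ W u := fun u hx => haNC u (hsub u hx)
      have hcN : ∀ x ∈ G.neighborFinset a ∩ C, σ x ≠ c := by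
        intro x hx he
        exact hc (Finset.mem_union_left _ (Finset.mem_image.2 ⟨x, hx, he⟩))
      have hcW : ∀ u ∈ G.neighborFinset a, ∀ x ∈ W u, σ x ≠ c := by
        intro u hu x hx he
        exact hc (Finset.mem_union_right _
          (Finset.mem_biUnion.2 ⟨u, hu, Finset.mem_image.2 ⟨x, hx, he⟩⟩))
      refine ⟨σ', W', ?_, ?_, ?_, ?_⟩
      · -- properness
        intro u hu w hw hadj
        obtain hu | hu := Finset.mem_insert.1 hu <;> obtain hw | hw := Finset.mem_insert.1 hw
        · exact absurd (hu ▸ hw ▸ hadj) (G.irrefl)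
        · rw [hu, hσ'a, hσ'C w hw]
          intro he
          exact hcN w (Finset.mem_inter.2
            ⟨(G.mem_neighborFinset _ _).2 (hu ▸ hadj), hw⟩) he.symm
        · rw [hw, hσ'a, hσ'C u hu]
          exact hcN u (Finset.mem_inter.2 ⟨(G.mem_neighborFinset _ _).2 (hw ▸ hadj).symm, hu⟩)
        · rw [hσ'C u hu, hσ'C w hw]; exact hprop u hu w hw hadj
      · -- subset
        intro u
        rw [hW'def u]
        split_ifs with hcond
        · rw [hint2 u hcond.1]
          exact Finset.insert_subset_insert _ (hsub u)
        · exact (hsub u).trans (Finset.inter_subset_inter le_rfl (Finset.subset_insert _ _))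
      · -- cardinality
        intro u
        rw [hW'def u]
        by_cases hu : u ∈ G.neighborFinset a
        · rw [hint2 u hu, Finset.card_insert_of_notMem (haNC u)]
          by_cases hlt : (W u).card < h
          · rw [if_pos ⟨hu, hlt⟩, Finset.card_insert_of_notMem (haW u)]
            have := hcard u
            omega
          · rw [if_neg (fun hcon => hlt hcon.2)]
            have := hcard u
            omega
        · rw [if_neg (fun hcon => hu hcon.1), hint u hu]
          exact hcard u
      · -- uniqueness
        intro u w hw x hx he
        rw [hW'def u] at hw
        by_cases hu : u ∈ G.neighborFinset a
        · rw [hint2 u hu] at hx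
          by_cases hlt : (W u).card < h
          · rw [if_pos ⟨hu, hlt⟩] at hw
            have hWeq : W u = G.neighborFinset u ∩ C := by
              refine Finset.eq_of_subset_of_card_le (hsub u) ?_
              have := hcard u
              omega
            obtain hw | hw := Finset.mem_insert.1 hw
            · obtain hx | hx := Finset.mem_insert.1 hx
              · rw [hx, hw]
              · exfalso
                rw [hw, hσ'a, hσ'C x (Finset.mem_inter.1 hx).2] at he
                exact hcW u hu x (hWeq ▸ hx) he
            · obtain hx | hx := Finset.mem_insert.1 hx
              · exfalso
                rw [hx, hσ'a, hσ'C w (Finset.mem_inter.1 (hsub u hw)).2] at he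
                exact hcW u hu w hw he.symm
              · rw [hσ'C x (Finset.mem_inter.1 hx).2,
                  hσ'C w (Finset.mem_inter.1 (hsub u hw)).2] at he
                exact huniq u w hw x hx he
          · rw [if_neg (fun hcon => hlt hcon.2)] at hw
            obtain hx | hx := Finset.mem_insert.1 hx
            · exfalso
              rw [hx, hσ'a, hσ'C w (Finset.mem_inter.1 (hsub u hw)).2] at he
              exact hcW u hu w hw he.symm
            · rw [hσ'C x (Finset.mem_inter.1 hx).2,
                hσ'C w (Finset.mem_inter.1 (hsub u hw)).2] at he
              exact huniq u w hw x hx he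
        · rw [if_neg (fun hcon => hu hcon.1)] at hw
          rw [hint u hu] at hx
          rw [hσ'C x (Finset.mem_inter.1 hx).2,
            hσ'C w (Finset.mem_inter.1 (hsub u hw)).2] at he
          exact huniq u w hw x hx he

/-- Number of witnesses of `v` in colouring `σ`: neighbours `u` of `v` whose colour
appears exactly once in the neighbourhood of `v`. -/
def witnessCount {V : Type*} [Fintype V] (G : SimpleGraph V) [DecidableRel G.Adj]
    {k : ℕ} (σ : V → Fin k) (v : V) : ℕ :=
  ((G.neighborFinset v).filter
    (fun u => ((G.neighborFinset v).filter (fun w => σ w = σ u)).card = 1)).card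

theorem pcf_greedy {V : Type*} [Fintype V] (G : SimpleGraph V) [DecidableRel G.Adj]
    (Δ h : ℕ) (hh : 1 ≤ h) (hΔ : ∀ v, G.degree v ≤ Δ) :
    ∃ σ : V → Fin ((h + 1) * Δ + 1),
      (∀ u v, G.Adj u v → σ u ≠ σ v) ∧
      ∀ v, min h (G.degree v) ≤ witnessCount G σ v := by
  classical
  obtain ⟨σ, W, hprop, hsub, hcard, huniq⟩ := pcf_key G Δ h hΔ Finset.univ
  simp only [Finset.inter_univ] at hsub hcard huniq
  refine ⟨σ, fun u v hadj => hprop u (Finset.mem_univ u) v (Finset.mem_univ v) hadj, fun v => ?_⟩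
  have hWsub : W v ⊆ (G.neighborFinset v).filter
      (fun u => ((G.neighborFinset v).filter (fun w => σ w = σ u)).card = 1) := by
    intro w hw
    refine Finset.mem_filter.2 ⟨hsub v hw, ?_⟩
    have : (G.neighborFinset v).filter (fun x => σ x = σ w) = {w} := by
      ext x
      simp only [Finset.mem_filter, Finset.mem_singleton]
      constructor
      · rintro ⟨hx, he⟩
        exact huniq v w hw x hx he
      · rintro rfl
        exact ⟨hsub v hw, rfl⟩
    rw [this, Finset.card_singleton]
  calc min h (G.degree v) = (W v).card := by
        rw [hcard v, G.card_neighborFinset_eq_degree]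
    _ ≤ _ := Finset.card_le_card hWsub
end

section
/- For every d-degenerate graph G of maximum degree Δ and every integer h ≥ 1, G admits a proper h-conflict-free colouring using at most hΔ + d + 1 colours, i.e. χ_pcf^h(G) ≤ hΔ + d + 1. -/
open Finset

/-- `G` is `d`-degenerate: every nonempty set of vertices contains a vertex with at
most `d` neighbours inside the set. -/
def Degenerate {V : Type*} [Fintype V] [DecidableEq V] (G : SimpleGraph V)
    [DecidableRel G.Adj] (d : ℕ) : Prop :=
  ∀ s : Finset V, s.Nonempty → ∃ v ∈ s, ((G.neighborFinset v) ∩ s).card ≤ d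

section Aux

set_option linter.unusedSectionVars false

variable {V : Type*} [Fintype V] [DecidableEq V]

/-- witness set of a colouring on a finset: elements whose colour is unique in the set -/
def wset {k : ℕ} (σ : V → Fin k) (A : Finset V) : Finset V :=
  A.filter (fun u => (A.filter (fun w => σ w = σ u)).card = 1)

lemma mem_wset {k : ℕ} {σ : V → Fin k} {A : Finset V} {u : V} :
    u ∈ wset σ A ↔ u ∈ A ∧ (A.filter (fun w => σ w = σ u)).card = 1 :=
  Finset.mem_filter

lemma wset_congr {k : ℕ} {σ τ : V → Fin k} {A : Finset V}
    (hst : ∀ u ∈ A, σ u = τ u) : wset σ A = wset τ A := by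
  unfold wset
  apply filter_congr
  intro u hu
  have : A.filter (fun w => σ w = σ u) = A.filter (fun w => τ w = τ u) := by
    apply filter_congr
    intro w hw
    rw [hst w hw, hst u hu]
  rw [this]

lemma pcf_main (G : SimpleGraph V)
    [DecidableRel G.Adj] (Δ h d : ℕ) (hΔ : ∀ v, G.degree v ≤ Δ)
    (hdeg : Degenerate G d) :
    ∀ s : Finset V, ∃ σ : V → Fin (h * Δ + d + 1),
      (∀ u ∈ s, ∀ w ∈ s, G.Adj u w → σ u ≠ σ w) ∧
      ∀ x : V, min h ((G.neighborFinset x ∩ s).card) ≤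
        (wset σ (G.neighborFinset x ∩ s)).card := by
  have hk : 0 < h * Δ + d + 1 := by omega
  suffices H : ∀ n (s : Finset V), s.card ≤ n → ∃ σ : V → Fin (h * Δ + d + 1),
      (∀ u ∈ s, ∀ w ∈ s, G.Adj u w → σ u ≠ σ w) ∧
      ∀ x : V, min h ((G.neighborFinset x ∩ s).card) ≤
        (wset σ (G.neighborFinset x ∩ s)).card by
    intro s; exact H s.card s le_rfl
  intro n
  induction n with
  | zero =>
    intro s hs
    have hse : s = ∅ := Finset.card_eq_zero.mp (Nat.le_zero.mp hs)
    subst hse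
    refine ⟨fun _ => ⟨0, hk⟩, by simp, ?_⟩
    intro x
    simp [wset]
  | succ n ih =>
    intro s hs
    rcases s.eq_empty_or_nonempty with hse | hsne
    · exact ih s (by simp [hse])
    -- pick the degenerate vertex
    obtain ⟨v, hvs, hvd⟩ := hdeg s hsne
    set s' := s.erase v with hs'
    have hvns' : v ∉ s' := Finset.notMem_erase v s
    have hins : insert v s' = s := Finset.insert_erase hvs
    have hcard' : s'.card ≤ n := by
      have h1 : s'.card = s.card - 1 := by rw [hs']; exact Finset.card_erase_of_mem hvs
      have h2 : 0 < s.card := Finset.card_pos.mpr hsne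
      omega
    obtain ⟨σ', hprop', hinv'⟩ := ih s' hcard'
    -- protected witness sets
    have hex : ∀ x : V, ∃ t ⊆ wset σ' (G.neighborFinset x ∩ s'),
        t.card = min h (wset σ' (G.neighborFinset x ∩ s')).card :=
      fun x => Finset.exists_subset_card_eq (min_le_right _ _)
    choose W hWsub hWcard using hex
    -- forbidden colours
    set F : Finset (Fin (h * Δ + d + 1)) :=
      ((G.neighborFinset v ∩ s').image σ') ∪
        (G.neighborFinset v).biUnion (fun x => (W x).image σ') with hF
    have hFcard : F.card ≤ d + Δ * h := by
      calc F.card ≤ ((G.neighborFinset v ∩ s').image σ').card +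
          ((G.neighborFinset v).biUnion (fun x => (W x).image σ')).card :=
            Finset.card_union_le _ _
        _ ≤ d + Δ * h := by
            gcongr
            · calc ((G.neighborFinset v ∩ s').image σ').card
                  ≤ (G.neighborFinset v ∩ s').card := Finset.card_image_le
                _ ≤ (G.neighborFinset v ∩ s).card := by
                    apply Finset.card_le_card
                    exact Finset.inter_subset_inter (Finset.Subset.refl _)
                      (Finset.erase_subset _ _)
                _ ≤ d := hvd
            · calc ((G.neighborFinset v).biUnion (fun x => (W x).image σ')).card
                  ≤ ∑ x ∈ G.neighborFinset v, ((W x).image σ').card :=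
                    Finset.card_biUnion_le
                _ ≤ ∑ x ∈ G.neighborFinset v, h := by
                    apply Finset.sum_le_sum
                    intro x _
                    calc ((W x).image σ').card ≤ (W x).card := Finset.card_image_le
                      _ ≤ h := by rw [hWcard]; exact min_le_left _ _
                _ = (G.neighborFinset v).card * h := by
                    rw [Finset.sum_const, smul_eq_mul]
                _ ≤ Δ * h := by
                    have := hΔ v
                    rw [SimpleGraph.card_neighborFinset_eq_degree]
                    exact Nat.mul_le_mul_right _ this
    have hFcard' : F.card ≤ d + h * Δ := by
      have hmc : Δ * h = h * Δ := Nat.mul_comm Δ h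
      omega
    -- pick a colour outside F
    have hcompl : (Fᶜ : Finset (Fin (h * Δ + d + 1))).Nonempty := by
      rw [← Finset.card_pos, Finset.card_compl]
      have hlt : F.card < Fintype.card (Fin (h * Δ + d + 1)) := by
        rw [Fintype.card_fin]
        omega
      omega
    obtain ⟨c, hc⟩ := hcompl
    have hcF : c ∉ F := Finset.mem_compl.mp hc
    set σ : V → Fin (h * Δ + d + 1) := Function.update σ' v c with hσ
    have hσeq : ∀ u : V, u ≠ v → σ u = σ' u := by
      intro u hu; simp [hσ, Function.update_of_ne hu]
    have hσv : σ v = c := by simp [hσ]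
    -- colours of back neighbours are forbidden
    have hback : ∀ u ∈ G.neighborFinset v ∩ s', σ' u ≠ c := by
      intro u hu heq
      exact hcF (Finset.mem_union_left _ (Finset.mem_image.mpr ⟨u, hu, heq⟩))
    -- protected colours are forbidden
    have hprotected : ∀ x ∈ G.neighborFinset v, ∀ u ∈ W x, σ' u ≠ c := by
      intro x hx u hu heq
      exact hcF (Finset.mem_union_right _
        (Finset.mem_biUnion.mpr ⟨x, hx, Finset.mem_image.mpr ⟨u, hu, heq⟩⟩))
    refine ⟨σ, ?_, ?_⟩
    · -- properness
      intro u hu w hw hadj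
      rw [← hins] at hu hw
      rcases Finset.mem_insert.mp hu with huv | hus'
      · rcases Finset.mem_insert.mp hw with hwv | hws'
        · exact absurd (by rw [huv, hwv] at hadj; exact hadj) (G.irrefl)
        · have hwv : w ≠ v := fun hcc => hvns' (hcc ▸ hws')
          have hwN : w ∈ G.neighborFinset v ∩ s' := by
            rw [Finset.mem_inter, SimpleGraph.mem_neighborFinset]
            exact ⟨by rw [huv] at hadj; exact hadj, hws'⟩
          rw [huv, hσv, hσeq w hwv]
          exact fun hcc => hback w hwN hcc.symm
      · rcases Finset.mem_insert.mp hw with hwv | hws'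
        · have huv : u ≠ v := fun hcc => hvns' (hcc ▸ hus')
          have huN : u ∈ G.neighborFinset v ∩ s' := by
            rw [Finset.mem_inter, SimpleGraph.mem_neighborFinset]
            exact ⟨by rw [hwv] at hadj; exact hadj.symm, hus'⟩
          rw [hwv, hσv, hσeq u huv]
          exact hback u huN
        · have huv : u ≠ v := fun hcc => hvns' (hcc ▸ hus')
          have hwv : w ≠ v := fun hcc => hvns' (hcc ▸ hws')
          rw [hσeq u huv, hσeq w hwv]
          exact hprop' u hus' w hws' hadj
    · -- witness invariant
      intro x
      by_cases hxv : G.Adj v x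
      case neg =>
        -- v is not a neighbour of x : nothing changes
        have hA : G.neighborFinset x ∩ s = G.neighborFinset x ∩ s' := by
          rw [← hins, Finset.inter_insert_of_notMem]
          rw [SimpleGraph.mem_neighborFinset]
          exact fun hcc => hxv hcc.symm
        rw [hA, wset_congr (σ := σ) (τ := σ')]
        · exact hinv' x
        · intro u hu
          apply hσeq
          rintro rfl
          exact hvns' (Finset.mem_inter.mp hu).2
      case pos =>
        set A' := G.neighborFinset x ∩ s' with hA'
        have hvmem : v ∈ G.neighborFinset x := by
          rw [SimpleGraph.mem_neighborFinset]; exact hxv.symm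
        have hxmem : x ∈ G.neighborFinset v := by
          rw [SimpleGraph.mem_neighborFinset]; exact hxv
        have hA : G.neighborFinset x ∩ s = insert v A' := by
          rw [← hins, Finset.inter_insert_of_mem hvmem]
        have hvA' : v ∉ A' := fun hcc => hvns' (Finset.mem_inter.mp hcc).2
        have hcW : ∀ u ∈ W x, σ' u ≠ c := hprotected x hxmem
        -- key: protected witnesses remain witnesses
        have hWsub' : ∀ u ∈ W x, u ∈ wset σ (insert v A') := by
          intro u hu
          have huw : u ∈ wset σ' A' := hWsub x hu
          have huA' : u ∈ A' := (mem_wset.mp huw).1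
          have hunv : u ≠ v := fun hcc => hvA' (hcc ▸ huA')
          have hfilter : (insert v A').filter (fun w => σ w = σ u) =
              A'.filter (fun w => σ' w = σ' u) := by
            rw [Finset.filter_insert]
            rw [if_neg]
            · apply filter_congr
              intro w hw
              have hwnv : w ≠ v := fun hcc => hvA' (hcc ▸ hw)
              rw [hσeq w hwnv, hσeq u hunv]
            · rw [hσv, hσeq u hunv]
              exact fun hcc => hcW u hu hcc.symm
          rw [mem_wset]
          refine ⟨Finset.mem_insert_of_mem huA', ?_⟩
          rw [hfilter]
          exact (mem_wset.mp huw).2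
        by_cases hcase : h ≤ (wset σ' A').card
        case pos =>
          -- at least h protected witnesses survive
          have hWc : (W x).card = h := by rw [hWcard, min_eq_left hcase]
          have hle : (W x).card ≤ (wset σ (insert v A')).card :=
            Finset.card_le_card (fun u hu => hWsub' u hu)
          rw [hA]
          calc min h (insert v A').card ≤ h := min_le_left _ _
            _ = (W x).card := hWc.symm
            _ ≤ _ := hle
        case neg =>
          -- all old colours distinct; new colour fresh, everything a witness
          push_neg at hcase
          have hinvx := hinv' x
          rw [← hA'] at hinvx
          have hwsub : wset σ' A' ⊆ A' := Finset.filter_subset _ _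
          have hA'le : A'.card ≤ (wset σ' A').card := by
            rcases le_or_gt h A'.card with hle | hlt
            · rw [min_eq_left hle] at hinvx; omega
            · rw [min_eq_right hlt.le] at hinvx; exact hinvx
          have hweq : wset σ' A' = A' :=
            Finset.eq_of_subset_of_card_le hwsub hA'le
          have hWeq : W x = A' := by
            apply Finset.eq_of_subset_of_card_le (hweq ▸ hWsub x)
            rw [hWcard, hweq, min_eq_right]
            omega
          -- every element of insert v A' is a witness
          have hall : insert v A' ⊆ wset σ (insert v A') := by
            intro u hu
            rcases Finset.mem_insert.mp hu with rfl | huA'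
            · -- the new vertex: its colour c is fresh
              rw [mem_wset]
              refine ⟨Finset.mem_insert_self _ _, ?_⟩
              rw [Finset.filter_insert, if_pos rfl]
              have hempty : A'.filter (fun w => σ w = σ u) = ∅ := by
                apply Finset.filter_false_of_mem
                intro w hw
                have hwnv : w ≠ u := fun hcc => hvA' (hcc ▸ hw)
                rw [hσeq w hwnv, hσv]
                exact fun hcc => hcW w (hWeq ▸ hw) hcc
              rw [hempty, Finset.card_insert_of_notMem (Finset.notMem_empty _),
                Finset.card_empty]
            · exact hWsub' u (hWeq ▸ huA')
          have hle : (insert v A').card ≤ (wset σ (insert v A')).card :=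
            Finset.card_le_card hall
          rw [hA]
          exact le_trans (min_le_right _ _) hle

end Aux

theorem pcf_degenerate {V : Type*} [Fintype V] [DecidableEq V] (G : SimpleGraph V)
    [DecidableRel G.Adj] (Δ h d : ℕ) (hh : 1 ≤ h) (hΔ : ∀ v, G.degree v ≤ Δ)
    (hdeg : Degenerate G d) :
    ∃ σ : V → Fin (h * Δ + d + 1),
      (∀ u v, G.Adj u v → σ u ≠ σ v) ∧
      ∀ v, min h (G.degree v) ≤ witnessCount G σ v := by
  obtain ⟨σ, hprop, hinv⟩ := pcf_main G Δ h d hΔ hdeg Finset.univ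
  refine ⟨σ, fun u v hadj => hprop u (Finset.mem_univ u) v (Finset.mem_univ v) hadj, ?_⟩
  intro v
  have hv := hinv v
  rw [Finset.inter_univ] at hv
  rw [SimpleGraph.card_neighborFinset_eq_degree] at hv
  exact hv
end

section
/- For every graph G of maximum degree Δ and every integer t with 0 ≤ t < 2Δ/3, every proper colouring of G in which each vertex v sees at least min(Δ−t, deg(v)) colours appearing an odd number of times in its neighbourhood is also a proper colouring in which each vertex v sees at least min(Δ − 3t/2, deg(v)) colours appearing exactly once in its neighbourhood. Consequently, χ_pcf^{Δ−3t/2}(G) ≤ χ_o^{Δ−t}(G). -/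
open Finset

variable {V : Type*} [Fintype V] [DecidableEq V]

/-- Number of colours appearing an odd number of times in the neighbourhood of `v`. -/
def oddColourCount {α : Type*} [DecidableEq α] (G : SimpleGraph V) [DecidableRel G.Adj]
    (σ : V → α) (v : V) : ℕ :=
  (((G.neighborFinset v).image σ).filter
    (fun c => Odd ((G.neighborFinset v).filter (fun w => σ w = c)).card)).card

/-- Number of colours appearing exactly once in the neighbourhood of `v`. -/
def solitaryColourCount {α : Type*} [DecidableEq α] (G : SimpleGraph V)
    [DecidableRel G.Adj] (σ : V → α) (v : V) : ℕ :=
  (((G.neighborFinset v).image σ).filter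
    (fun c => ((G.neighborFinset v).filter (fun w => σ w = c)).card = 1)).card

lemma core_ineq {α : Type*} [DecidableEq α] (G : SimpleGraph V) [DecidableRel G.Adj]
    (σ : V → α) (v : V) :
    3 * oddColourCount G σ v ≤ G.degree v + 2 * solitaryColourCount G σ v := by
  classical
  set N := G.neighborFinset v with hN
  set m : α → ℕ := fun c => (N.filter (fun w => σ w = c)).card with hm
  set C := N.image σ with hC
  set O := C.filter (fun c => Odd (m c)) with hO
  set S := C.filter (fun c => m c = 1) with hS
  have hdeg : G.degree v = ∑ c ∈ C, m c := by
    rw [← SimpleGraph.card_neighborFinset_eq_degree]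
    exact Finset.card_eq_sum_card_image σ N
  have hSO : S ⊆ O := by
    intro c hc
    simp only [hS, hO, Finset.mem_filter] at hc ⊢
    exact ⟨hc.1, hc.2 ▸ odd_one⟩
  have h1 : ∑ c ∈ O, m c ≤ ∑ c ∈ C, m c :=
    Finset.sum_le_sum_of_subset (Finset.filter_subset _ _)
  have h2 : ∑ c ∈ O \ S, m c + ∑ c ∈ S, m c = ∑ c ∈ O, m c :=
    Finset.sum_sdiff hSO
  have hSsum : ∑ c ∈ S, m c = S.card := by
    rw [Finset.sum_congr rfl (fun c hc => (Finset.mem_filter.mp hc).2)]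
    simp
    rfl
  have hOS : (O \ S).card * 3 ≤ ∑ c ∈ O \ S, m c := by
    have := Finset.card_nsmul_le_sum (O \ S) m 3 ?_
    · simpa using this
    · intro c hc
      rw [Finset.mem_sdiff, hO, hS, Finset.mem_filter, Finset.mem_filter] at hc
      have hodd := hc.1.2
      have hne : m c ≠ 1 := fun h => hc.2 ⟨hc.1.1, h⟩
      obtain ⟨k, hk⟩ := hodd
      omega
  have hcard : (O \ S).card = O.card - S.card := Finset.card_sdiff_of_subset hSO
  have hScard : S.card ≤ O.card := Finset.card_le_card hSO
  have hodd_eq : oddColourCount G σ v = O.card := rfl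
  have hsol_eq : solitaryColourCount G σ v = S.card := rfl
  omega

lemma main_ineq {α : Type*} [DecidableEq α] (G : SimpleGraph V) [DecidableRel G.Adj]
    (Δ t : ℕ) (hΔ : ∀ v, G.degree v ≤ Δ) (ht : 3 * t < 2 * Δ)
    (σ : V → α) (ho : ∀ v, min (Δ - t) (G.degree v) ≤ oddColourCount G σ v) :
    ∀ v, min (Δ - 3 * t / 2) (G.degree v) ≤ solitaryColourCount G σ v := by
  intro v
  have h1 := core_ineq G σ v
  have h2 := ho v
  have h3 := hΔ v
  have h4 : oddColourCount G σ v ≤ G.degree v := by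
    have : oddColourCount G σ v ≤ ((G.neighborFinset v).image σ).card :=
      Finset.card_filter_le _ _
    have h5 : ((G.neighborFinset v).image σ).card ≤ (G.neighborFinset v).card :=
      Finset.card_image_le
    rw [SimpleGraph.card_neighborFinset_eq_degree] at h5
    omega
  omega

theorem odd_implies_pcf (G : SimpleGraph V) [DecidableRel G.Adj] (Δ t : ℕ)
    (hΔ : ∀ v, G.degree v ≤ Δ) (ht : 3 * t < 2 * Δ) :
    (∀ σ : V → ℕ, (∀ u v, G.Adj u v → σ u ≠ σ v) →
      (∀ v, min (Δ - t) (G.degree v) ≤ oddColourCount G σ v) →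
      (∀ v, min (Δ - 3 * t / 2) (G.degree v) ≤ solitaryColourCount G σ v)) ∧
    (∀ k : ℕ, (∃ σ : V → Fin k, (∀ u v, G.Adj u v → σ u ≠ σ v) ∧
        ∀ v, min (Δ - t) (G.degree v) ≤ oddColourCount G σ v) →
      (∃ σ : V → Fin k, (∀ u v, G.Adj u v → σ u ≠ σ v) ∧
        ∀ v, min (Δ - 3 * t / 2) (G.degree v) ≤ solitaryColourCount G σ v)) := by
  refine ⟨fun σ _ ho => main_ineq G Δ t hΔ ht σ ho, ?_⟩
  rintro k ⟨σ, hp, ho⟩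
  exact ⟨σ, hp, main_ineq G Δ t hΔ ht σ ho⟩
end

section
/- The 5-cycle C₅ satisfies χ_pcf(C₅) = 5; that is, C₅ admits a proper conflict-free 5-colouring but no proper conflict-free 4-colouring. -/
open Finset

/-- `σ` is a proper conflict-free colouring of `G`: it is proper and every non-isolated
vertex has a neighbour whose colour appears exactly once in its neighbourhood. -/
def IsPCF {V : Type*} [Fintype V] [DecidableEq V] (G : SimpleGraph V)
    [DecidableRel G.Adj] {k : ℕ} (σ : V → Fin k) : Prop :=
  (∀ u v, G.Adj u v → σ u ≠ σ v) ∧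
  ∀ v, 0 < G.degree v → ∃ u ∈ G.neighborFinset v,
    ((G.neighborFinset v).filter (fun w => σ w = σ u)).card = 1

instance {V : Type*} [Fintype V] [DecidableEq V] (G : SimpleGraph V)
    [DecidableRel G.Adj] {k : ℕ} (σ : V → Fin k) : Decidable (IsPCF G σ) := by
  unfold IsPCF; infer_instance

lemma pcf_helper (a b : Fin 5) (σ : Fin 5 → Fin 4) (hab : a ≠ b)
    (h : ∃ u ∈ ({a, b} : Finset (Fin 5)),
      (({a, b} : Finset (Fin 5)).filter (fun w => σ w = σ u)).card = 1) :
    σ a ≠ σ b := by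
  rintro heq
  obtain ⟨u, hu, hc⟩ := h
  have hσu : σ u = σ a := by
    rcases Finset.mem_insert.mp hu with h | h
    · rw [h]
    · rw [Finset.mem_singleton.mp h, heq]
  have hfil : (({a, b} : Finset (Fin 5)).filter (fun w => σ w = σ u)) = {a, b} := by
    apply Finset.filter_true_of_mem
    intro x hx
    rcases Finset.mem_insert.mp hx with h | h
    · rw [h, hσu]
    · rw [Finset.mem_singleton.mp h, hσu, heq]
  rw [hfil, Finset.card_insert_of_notMem (by simpa using hab), Finset.card_singleton] at hc
  omega

set_option maxRecDepth 10000 in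
theorem pcf_C5 :
    (∃ σ : Fin 5 → Fin 5, IsPCF (SimpleGraph.cycleGraph 5) σ) ∧
    ¬ (∃ σ : Fin 5 → Fin 4, IsPCF (SimpleGraph.cycleGraph 5) σ) := by
  constructor
  · exact ⟨id, by decide⟩
  · rintro ⟨σ, hp, hcf⟩
    have hdeg : ∀ v : Fin 5, 0 < (SimpleGraph.cycleGraph 5).degree v := by decide
    have n0 : (SimpleGraph.cycleGraph 5).neighborFinset 0 = {1, 4} := by decide
    have n1 : (SimpleGraph.cycleGraph 5).neighborFinset 1 = {2, 0} := by decide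
    have n2 : (SimpleGraph.cycleGraph 5).neighborFinset 2 = {3, 1} := by decide
    have n3 : (SimpleGraph.cycleGraph 5).neighborFinset 3 = {4, 2} := by decide
    have n4 : (SimpleGraph.cycleGraph 5).neighborFinset 4 = {0, 3} := by decide
    have d0 : σ 1 ≠ σ 4 := pcf_helper _ _ σ (by decide) (n0 ▸ hcf 0 (hdeg 0))
    have d1 : σ 2 ≠ σ 0 := pcf_helper _ _ σ (by decide) (n1 ▸ hcf 1 (hdeg 1))
    have d2 : σ 3 ≠ σ 1 := pcf_helper _ _ σ (by decide) (n2 ▸ hcf 2 (hdeg 2))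
    have d3 : σ 4 ≠ σ 2 := pcf_helper _ _ σ (by decide) (n3 ▸ hcf 3 (hdeg 3))
    have d4 : σ 0 ≠ σ 3 := pcf_helper _ _ σ (by decide) (n4 ▸ hcf 4 (hdeg 4))
    have e0 : σ 0 ≠ σ 1 := hp 0 1 (by decide)
    have e1 : σ 1 ≠ σ 2 := hp 1 2 (by decide)
    have e2 : σ 2 ≠ σ 3 := hp 2 3 (by decide)
    have e3 : σ 3 ≠ σ 4 := hp 3 4 (by decide)
    have e4 : σ 4 ≠ σ 0 := hp 4 0 (by decide)
    have inj : Function.Injective σ := by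
      intro i j h
      fin_cases i <;> fin_cases j <;>
        first
          | rfl
          | exact absurd h (by assumption)
          | exact absurd h.symm (by assumption)
    have := Fintype.card_le_of_injective σ inj
    simp at this
end

section
/- For every cycle Cₙ with n ≥ 3 whose length n is not a multiple of 3 and n ≠ 5, χ_pcf(Cₙ) = 4; for n a multiple of 3, χ_pcf(Cₙ) = 3. -/
open Finset

namespace PCFAux

open SimpleGraph
open scoped Fin.CommRing

lemma mod_eval {x n : ℕ} (h0 : 0 < n) (h : x < 2 * n) :
    x % n = if x < n then x else x - n := by
  split_ifs with hx
  · exact Nat.mod_eq_of_lt hx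
  · rw [Nat.mod_eq_sub_mod (le_of_not_gt hx)]
    exact Nat.mod_eq_of_lt (by omega)

lemma val_two {m : ℕ} : ((2 : Fin (m+3)) : ℕ) = 2 := by
  rw [show (2 : Fin (m+3)) = 1 + 1 from (one_add_one_eq_two).symm, Fin.val_add, Fin.val_one]
  exact Nat.mod_eq_of_lt (by omega)

lemma self_ne_add_two {m : ℕ} (v : Fin (m+3)) : v ≠ v + 2 := by
  intro h
  have h2 := congrArg Fin.val h
  rw [Fin.val_add, val_two, mod_eval (by omega) (by omega)] at h2
  have := v.isLt
  split_ifs at h2 <;> omega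

lemma key_iff {m k : ℕ} (σ : Fin (m+3) → Fin k) :
    IsPCF (cycleGraph (m+3)) σ ↔ ∀ v, σ v ≠ σ (v+1) ∧ σ v ≠ σ (v+2) := by
  have hdeg : ∀ v : Fin (m+3), (cycleGraph (m+3)).degree v = 2 :=
    fun v => cycleGraph_degree_three_le
  have hnbr : ∀ v : Fin (m+3), (cycleGraph (m+3)).neighborFinset v = {v - 1, v + 1} :=
    fun v => cycleGraph_neighborFinset
  constructor
  · rintro ⟨hp, hc⟩ v
    refine ⟨hp v (v+1) ?_, ?_⟩
    · rw [cycleGraph_adj]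
      right
      ring
    · intro heq
      obtain ⟨u, hu, hcard⟩ := hc (v+1) (by rw [hdeg]; omega)
      rw [hnbr] at hu hcard
      have e1 : (v+1) - 1 = v := by ring
      have e2 : (v+1) + 1 = v + 2 := by ring
      rw [e1, e2] at hu hcard
      have hσu : σ u = σ v := by
        rcases Finset.mem_insert.mp hu with h | h
        · rw [h]
        · rw [Finset.mem_singleton.mp h, ← heq]
      rw [Finset.filter_insert, if_pos (by rw [hσu]), Finset.filter_singleton,
        if_pos (by rw [hσu, heq]),
        Finset.card_insert_of_notMem (by simpa using self_ne_add_two v)] at hcard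
      simp at hcard
  · intro h
    constructor
    · intro u v huv
      rw [cycleGraph_adj] at huv
      rcases huv with h1 | h1
      · have hu : u = v + 1 := by rw [← h1]; ring
        rw [hu]
        exact (h v).1.symm
      · have hv : v = u + 1 := by rw [← h1]; ring
        rw [hv]
        exact (h u).1
    · intro v _
      refine ⟨v - 1, by rw [hnbr]; exact Finset.mem_insert_self _ _, ?_⟩
      have hne : σ (v+1) ≠ σ (v-1) := by
        have := (h (v-1)).2
        rw [show (v-1) + 2 = v + 1 by ring] at this
        exact this.symm
      rw [hnbr, Finset.filter_insert, if_pos rfl, Finset.filter_singleton, if_neg hne]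
      simp

lemma exists_pcf {m k : ℕ} (f : ℕ → Fin k)
    (hf : ∀ x, x < m+3 → f x ≠ f ((x+1) % (m+3)) ∧ f x ≠ f ((x+2) % (m+3))) :
    ∃ σ : Fin (m+3) → Fin k, IsPCF (cycleGraph (m+3)) σ := by
  refine ⟨fun v => f v.val, (key_iff _).mpr fun v => ?_⟩
  have h1 : (v+1).val = (v.val+1) % (m+3) := by rw [Fin.val_add, Fin.val_one]
  have h2 : (v+2).val = (v.val+2) % (m+3) := by rw [Fin.val_add, val_two]
  simp only [h1, h2]
  exact hf v.val v.isLt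

lemma construct1 {m : ℕ} (h : (m+3) % 3 = 0) :
    ∃ σ : Fin (m+3) → Fin 3, IsPCF (cycleGraph (m+3)) σ := by
  refine exists_pcf (fun x => ⟨x % 3, by omega⟩) (fun x hx => ⟨?_, ?_⟩) <;>
  · simp only [ne_eq, Fin.mk.injEq]
    rw [Nat.mod_mod_of_dvd _ (by omega : (3:ℕ) ∣ (m+3))]
    omega

lemma construct2 {m : ℕ} (h : m % 3 = 1) :
    ∃ σ : Fin (m+3) → Fin 4, IsPCF (cycleGraph (m+3)) σ := by
  refine exists_pcf (fun x => ⟨if x = m+2 then 3 else x % 3, by split <;> omega⟩)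
    (fun x hx => ⟨?_, ?_⟩)
  · simp only [ne_eq, Fin.mk.injEq]
    rw [mod_eval (x := x+1) (n := m+3) (by omega) (by omega)]
    split_ifs <;> omega
  · simp only [ne_eq, Fin.mk.injEq]
    rw [mod_eval (x := x+2) (n := m+3) (by omega) (by omega)]
    split_ifs <;> omega

lemma construct3 {m : ℕ} (h : m % 3 = 2) (h5 : m ≠ 2) :
    ∃ σ : Fin (m+3) → Fin 4, IsPCF (cycleGraph (m+3)) σ := by
  refine exists_pcf (fun x => ⟨if x < m-5 then x % 3 else (x - (m-5)) % 4, by split <;> omega⟩)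
    (fun x hx => ⟨?_, ?_⟩)
  · simp only [ne_eq, Fin.mk.injEq]
    rw [mod_eval (x := x+1) (n := m+3) (by omega) (by omega)]
    split_ifs <;> omega
  · simp only [ne_eq, Fin.mk.injEq]
    rw [mod_eval (x := x+2) (n := m+3) (by omega) (by omega)]
    split_ifs <;> omega

lemma no3 {m : ℕ} (h : ¬ (3 ∣ (m+3))) :
    ¬ ∃ σ : Fin (m+3) → Fin 3, IsPCF (cycleGraph (m+3)) σ := by
  rintro ⟨σ, hσ⟩
  rw [key_iff] at hσ
  have step : ∀ v : Fin (m+3), σ (v + 3) = σ v := by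
    intro v
    have h0 := hσ v
    have h1 := hσ (v+1)
    have h2 := hσ (v+2)
    rw [show (v+1)+1 = v+2 by ring, show (v+1)+2 = v+3 by ring] at h1
    rw [show (v+2)+1 = v+3 by ring] at h2
    have b0 := (σ v).isLt
    have b1 := (σ (v+1)).isLt
    have b2 := (σ (v+2)).isLt
    have b3 := (σ (v+3)).isLt
    simp only [ne_eq, Fin.ext_iff] at h0 h1 h2 ⊢
    omega
  have iter : ∀ (j : ℕ) (v : Fin (m+3)), σ (v + (3 * j : ℕ)) = σ v := by
    intro j
    induction j with
    | zero => simp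
    | succ j ih =>
      intro v
      have e : ((3 * (j+1) : ℕ) : Fin (m+3)) = ((3 * j : ℕ) : Fin (m+3)) + 3 := by
        push_cast
        ring
      rw [e, ← add_assoc, step, ih]
  obtain ⟨j, hj⟩ := Nat.exists_mul_mod_eq_one_of_coprime
    (Nat.prime_three.coprime_iff_not_dvd.mpr h) (by omega)
  have h1 := iter j 0
  have ec : ((3 * j : ℕ) : Fin (m+3)) = 1 := by
    apply Fin.ext
    rw [Fin.val_natCast, hj.2, Fin.val_one]
  rw [ec, zero_add] at h1
  exact (hσ 0).1 (by rw [zero_add]; exact h1.symm)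

lemma no2 {m : ℕ} : ¬ ∃ σ : Fin (m+3) → Fin 2, IsPCF (cycleGraph (m+3)) σ := by
  rintro ⟨σ, hσ⟩
  rw [key_iff] at hσ
  have h0 := hσ 0
  have h1 := hσ (0+1)
  rw [show ((0:Fin (m+3))+1)+1 = 0+2 by ring] at h1
  have b0 := (σ 0).isLt
  have b1 := (σ (0+1)).isLt
  have b2 := (σ (0+2)).isLt
  simp only [ne_eq, Fin.ext_iff] at h0 h1
  omega

end PCFAux

theorem pcf_cycles (n : ℕ) (hn : 3 ≤ n) :
    (¬ (3 ∣ n) → n ≠ 5 →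
      (∃ σ : Fin n → Fin 4, IsPCF (SimpleGraph.cycleGraph n) σ) ∧
      ¬ (∃ σ : Fin n → Fin 3, IsPCF (SimpleGraph.cycleGraph n) σ)) ∧
    (3 ∣ n →
      (∃ σ : Fin n → Fin 3, IsPCF (SimpleGraph.cycleGraph n) σ) ∧
      ¬ (∃ σ : Fin n → Fin 2, IsPCF (SimpleGraph.cycleGraph n) σ)) := by
  obtain ⟨m, rfl⟩ : ∃ m, n = m + 3 := ⟨n - 3, by omega⟩
  constructor
  · intro h3 h5
    refine ⟨?_, PCFAux.no3 h3⟩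
    have hm : m % 3 = 1 ∨ m % 3 = 2 := by omega
    rcases hm with h | h
    · exact PCFAux.construct2 h
    · exact PCFAux.construct3 h (by omega)
  · intro h3
    exact ⟨PCFAux.construct1 (by omega), PCFAux.no2⟩
end

section
/- Let n ≥ 5 and let G be the graph obtained from the complete graph Kₙ by subdividing every edge exactly once. Then χ_pcf(G) = n, while the maximum degree of G is n−1, so χ_pcf(G) = Δ(G) + 1; moreover the chromatic number of G is 2. -/
open Finset

/-- The graph obtained from the complete graph `Kₙ` by subdividing every edge exactly
once: branch vertices are `Fin n`, subdivision vertices are non-diagonal elements of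
`Sym2 (Fin n)`, and a branch vertex is adjacent to the subdivision vertices of the
edges containing it. -/
def subdividedKn (n : ℕ) : SimpleGraph (Fin n ⊕ {e : Sym2 (Fin n) // ¬ e.IsDiag}) :=
  SimpleGraph.fromRel (fun a b =>
    ∃ (i : Fin n) (e : {e : Sym2 (Fin n) // ¬ e.IsDiag}),
      a = Sum.inl i ∧ b = Sum.inr e ∧ i ∈ e.val)

noncomputable instance (n : ℕ) : DecidableRel (subdividedKn n).Adj :=
  Classical.decRel _

/-! ### Auxiliary lemmas -/

lemma skn_adj_inl {n : ℕ} {i : Fin n} {x} :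
    (subdividedKn n).Adj (Sum.inl i) x ↔ ∃ e, x = Sum.inr e ∧ i ∈ e.val := by
  constructor
  · rintro ⟨hne, h | h⟩ <;> obtain ⟨j, e, h1, h2, h3⟩ := h
    · obtain rfl : i = j := by simpa using h1
      exact ⟨e, h2, h3⟩
    · exact absurd h2 (by simp)
  · rintro ⟨e, rfl, he⟩
    exact ⟨by simp, Or.inl ⟨i, e, rfl, rfl, he⟩⟩

lemma skn_adj_inr {n : ℕ} {e : {e : Sym2 (Fin n) // ¬ e.IsDiag}} {x} :
    (subdividedKn n).Adj (Sum.inr e) x ↔ ∃ i, x = Sum.inl i ∧ i ∈ e.val := by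
  constructor
  · rintro ⟨hne, h | h⟩ <;> obtain ⟨j, f, h1, h2, h3⟩ := h
    · exact absurd h1 (by simp)
    · refine ⟨j, h1, ?_⟩
      obtain rfl : f = e := by simpa using h2.symm
      exact h3
  · rintro ⟨i, rfl, he⟩
    exact ⟨by simp, Or.inr ⟨i, e, rfl, rfl, he⟩⟩

lemma skn_nbr_inr {n : ℕ} (a b : Fin n) (h : ¬ (s(a,b) : Sym2 (Fin n)).IsDiag) :
    (subdividedKn n).neighborFinset (Sum.inr ⟨s(a,b), h⟩) = {Sum.inl a, Sum.inl b} := by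
  ext x
  simp only [SimpleGraph.mem_neighborFinset, skn_adj_inr, Sym2.mem_iff, mem_insert, mem_singleton]
  aesop

lemma skn_deg_inl {n : ℕ} (i : Fin n) : (subdividedKn n).degree (Sum.inl i) = n - 1 := by
  rw [SimpleGraph.degree]
  have := Finset.card_bij (t := (subdividedKn n).neighborFinset (Sum.inl i))
    (fun (j : Fin n) (hj : j ∈ univ.erase i) =>
      (Sum.inr ⟨s(i,j), by simp [Sym2.mk_isDiag_iff]; exact (Finset.ne_of_mem_erase hj).symm⟩ :
        Fin n ⊕ {e : Sym2 (Fin n) // ¬ e.IsDiag}))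
    (fun j hj => by
      rw [SimpleGraph.mem_neighborFinset, skn_adj_inl]
      exact ⟨_, rfl, Sym2.mem_mk_left i j⟩)
    (fun j hj k hk hjk => by
      simp only [Sum.inr.injEq, Subtype.mk.injEq, Sym2.eq_iff] at hjk
      rcases hjk with ⟨-, rfl⟩ | ⟨rfl, rfl⟩ <;> rfl)
    (fun x hx => by
      rw [SimpleGraph.mem_neighborFinset, skn_adj_inl] at hx
      obtain ⟨⟨e, he⟩, rfl, hme⟩ := hx
      induction e using Sym2.ind with
      | _ a b =>
        rw [Sym2.mem_iff] at hme
        rw [Sym2.mk_isDiag_iff] at he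
        rcases hme with rfl | rfl
        · exact ⟨b, Finset.mem_erase.2 ⟨fun hb => he hb.symm, mem_univ _⟩, rfl⟩
        · exact ⟨a, Finset.mem_erase.2 ⟨fun ha => he ha, mem_univ _⟩, by simp [Sym2.eq_swap]⟩)
  rw [← this, Finset.card_erase_of_mem (mem_univ i), Finset.card_univ, Fintype.card_fin]

lemma skn_deg_inr {n : ℕ} (e : {e : Sym2 (Fin n) // ¬ e.IsDiag}) :
    (subdividedKn n).degree (Sum.inr e) = 2 := by
  obtain ⟨e, he⟩ := e
  induction e using Sym2.ind with
  | _ a b =>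
    rw [Sym2.mk_isDiag_iff] at he
    rw [SimpleGraph.degree, skn_nbr_inr a b (by simpa using he)]
    rw [Finset.card_insert_of_notMem (by simp [he]), Finset.card_singleton]

lemma skn_maxdeg (n : ℕ) (hn : 5 ≤ n) : (subdividedKn n).maxDegree = n - 1 := by
  refine le_antisymm (SimpleGraph.maxDegree_le_of_forall_degree_le _ _ fun v => ?_) ?_
  · rcases v with i | e
    · rw [skn_deg_inl]
    · rw [skn_deg_inr]; omega
  · calc n - 1 = (subdividedKn n).degree (Sum.inl (⟨0, by omega⟩ : Fin n)) := (skn_deg_inl _).symm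
    _ ≤ _ := SimpleGraph.degree_le_maxDegree _ _

lemma skn_chrom (n : ℕ) (hn : 5 ≤ n) : (subdividedKn n).chromaticNumber = 2 := by
  have C : (subdividedKn n).Coloring (Fin 2) := by
    refine SimpleGraph.Coloring.mk (Sum.elim (fun _ => 0) (fun _ => 1)) ?_
    intro u v huv
    rcases u with i | e
    · obtain ⟨e, rfl, -⟩ := skn_adj_inl.1 huv; simp
    · obtain ⟨i, rfl, -⟩ := skn_adj_inr.1 huv; simp
  have hcol : (subdividedKn n).Colorable 2 := ⟨C⟩
  rw [show ((2 : ℕ∞)) = ((2 : ℕ) : ℕ∞) by rfl,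
    SimpleGraph.chromaticNumber_eq_iff_forall_surjective hcol]
  intro D c
  have hadj : (subdividedKn n).Adj (Sum.inl (⟨0, by omega⟩ : Fin n))
      (Sum.inr ⟨s((⟨0, by omega⟩ : Fin n), (⟨1, by omega⟩ : Fin n)),
        by simp [Sym2.mk_isDiag_iff, Fin.ext_iff]⟩) := by
    rw [skn_adj_inl]
    exact ⟨_, rfl, Sym2.mem_mk_left _ _⟩
  have hne := D.valid hadj
  have key : ∀ a b c : Fin 2, a ≠ b → c = a ∨ c = b := by decide
  rcases key _ _ c hne with h | h
  · exact ⟨_, h.symm⟩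
  · exact ⟨_, h.symm⟩

/-! ### Fin arithmetic facts -/

section FinFacts
variable {n : ℕ} [NeZero n]

lemma skn_negone_val (hn : 5 ≤ n) : ((-1 : Fin n) : ℕ) = n - 1 := by
  have h : (-1 : Fin n) = ⟨n-1, by omega⟩ := by
    rw [neg_eq_iff_add_eq_zero]
    apply Fin.ext
    rw [Fin.val_add, Fin.val_one']
    simp only [Fin.val_mk, Fin.val_zero]
    have h2 : 1 % n + (n - 1) = n := by
      have h1 : 1 % n = 1 := Nat.mod_eq_of_lt (by omega); omega
    rw [h2, Nat.mod_self]
  rw [h]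

lemma skn_one_val (hn : 5 ≤ n) : ((1 : Fin n) : ℕ) = 1 := by
  rw [Fin.val_one', Nat.mod_eq_of_lt (by omega)]
lemma skn_two_val (hn : 5 ≤ n) : ((2 : Fin n) : ℕ) = 2 := by
  rw [Fin.coe_ofNat_eq_mod, Nat.mod_eq_of_lt (by omega)]
lemma skn_three_val (hn : 5 ≤ n) : ((3 : Fin n) : ℕ) = 3 := by
  rw [Fin.coe_ofNat_eq_mod, Nat.mod_eq_of_lt (by omega)]

lemma skn_one_ne_zero (hn : 5 ≤ n) : (1 : Fin n) ≠ 0 := by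
  rw [Ne, Fin.ext_iff, skn_one_val hn, Fin.val_zero]; omega
lemma skn_one_ne_negone (hn : 5 ≤ n) : (1 : Fin n) ≠ -1 := by
  rw [Ne, Fin.ext_iff, skn_one_val hn, skn_negone_val hn]; omega
lemma skn_two_ne_zero (hn : 5 ≤ n) : (2 : Fin n) ≠ 0 := by
  rw [Ne, Fin.ext_iff, skn_two_val hn, Fin.val_zero]; omega
lemma skn_three_ne_zero (hn : 5 ≤ n) : (3 : Fin n) ≠ 0 := by
  rw [Ne, Fin.ext_iff, skn_three_val hn, Fin.val_zero]; omega
lemma skn_two_ne_one (hn : 5 ≤ n) : (2 : Fin n) ≠ 1 := by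
  rw [Ne, Fin.ext_iff, skn_two_val hn, skn_one_val hn]; omega
lemma skn_three_ne_one (hn : 5 ≤ n) : (3 : Fin n) ≠ 1 := by
  rw [Ne, Fin.ext_iff, skn_three_val hn, skn_one_val hn]; omega
lemma skn_three_ne_two (hn : 5 ≤ n) : (3 : Fin n) ≠ 2 := by
  rw [Ne, Fin.ext_iff, skn_three_val hn, skn_two_val hn]; omega

/-! ### The colouring -/

/-- sum of the two endpoints of an unordered pair -/
noncomputable def skn_esum : Sym2 (Fin n) → Fin n :=
  Sym2.lift ⟨fun a b => a + b, fun a b => add_comm a b⟩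

/-- colour of a subdivision vertex -/
noncomputable def skn_gcol (e : Sym2 (Fin n)) : Fin n :=
  if (0 : Fin n) ∈ e then (if skn_esum e = -1 then 1 else skn_esum e + 1) else skn_esum e

lemma skn_esum_mk (a b : Fin n) : skn_esum s(a,b) = a + b := by
  simp [skn_esum]

lemma skn_gcol_mk_nz {a b : Fin n} (ha : a ≠ 0) (hb : b ≠ 0) :
    skn_gcol s(a,b) = a + b := by
  rw [skn_gcol, if_neg, skn_esum_mk]
  rw [Sym2.mem_iff]
  rintro (h | h)
  · exact ha h.symm
  · exact hb h.symm

lemma skn_gcol_mk_z (b : Fin n) :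
    skn_gcol s((0:Fin n), b) = if b = -1 then 1 else b + 1 := by
  rw [skn_gcol, if_pos (Sym2.mem_mk_left _ _), skn_esum_mk, zero_add]

/-- properness at the first endpoint -/
lemma skn_gcol_ne (hn : 5 ≤ n) {a b : Fin n} (hab : a ≠ b) : skn_gcol s(a,b) ≠ a := by
  rcases eq_or_ne a 0 with rfl | ha
  · rw [skn_gcol_mk_z]
    split
    · exact skn_one_ne_zero hn
    · next h =>
      intro hc
      exact h (neg_eq_of_add_eq_zero_left hc).symm
  · rcases eq_or_ne b 0 with rfl | hb
    · rw [Sym2.eq_swap, skn_gcol_mk_z]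
      split
      · next h => rw [h]; exact skn_one_ne_negone hn
      · intro hc
        exact skn_one_ne_zero hn (by rwa [add_eq_left] at hc)
    · rw [skn_gcol_mk_nz ha hb]
      intro hc
      exact hb (by rwa [add_eq_left] at hc)

/-- properness at any endpoint -/
lemma skn_gcol_mem_ne (hn : 5 ≤ n) {e : Sym2 (Fin n)} (he : ¬ e.IsDiag) {i : Fin n}
    (hi : i ∈ e) : skn_gcol e ≠ i := by
  induction e using Sym2.ind with
  | _ a b =>
    rw [Sym2.mk_isDiag_iff] at he
    rw [Sym2.mem_iff] at hi
    rcases hi with rfl | rfl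
    · exact skn_gcol_ne hn he
    · rw [Sym2.eq_swap]
      exact skn_gcol_ne hn (Ne.symm he)

/-- the distinguished other endpoint for the star of `i` -/
noncomputable def skn_jch (i : Fin n) : Fin n :=
  if i = -1 then 1 else if i = 2 then 3 else 2

lemma skn_jch_ne_zero (hn : 5 ≤ n) (i : Fin n) : skn_jch i ≠ 0 := by
  rw [skn_jch]
  split
  · exact skn_one_ne_zero hn
  · split
    · exact skn_three_ne_zero hn
    · exact skn_two_ne_zero hn

lemma skn_jch_ne (hn : 5 ≤ n) (i : Fin n) : skn_jch i ≠ i := by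
  rw [skn_jch]
  split
  · next h => rw [h]; exact skn_one_ne_negone hn
  · split
    · next _ h => rw [h]; exact skn_three_ne_two hn
    · next _ h => exact fun hc => h hc.symm

lemma skn_jch_ne_one (hn : 5 ≤ n) {i : Fin n} (hi : i ≠ -1) : skn_jch i ≠ 1 := by
  rw [skn_jch, if_neg hi]
  split
  · exact skn_three_ne_one hn
  · exact skn_two_ne_one hn

/-- uniqueness of the distinguished colour in the star of `i ≠ 0` -/
lemma skn_star_inj (hn : 5 ≤ n) {i : Fin n} (hi : i ≠ 0) {k : Fin n} (hk : k ≠ i)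
    (h : skn_gcol s(i,k) = skn_gcol s(i, skn_jch i)) : k = skn_jch i := by
  have hu : skn_gcol s(i, skn_jch i) = i + skn_jch i :=
    skn_gcol_mk_nz hi (skn_jch_ne_zero hn i)
  rcases eq_or_ne k 0 with rfl | hk0
  · exfalso
    rw [Sym2.eq_swap, skn_gcol_mk_z, hu] at h
    by_cases hi1 : i = -1
    · rw [if_pos hi1, hi1, show skn_jch (-1 : Fin n) = 1 from if_pos rfl] at h
      rw [neg_add_cancel] at h
      exact skn_one_ne_zero hn h
    · rw [if_neg hi1] at h
      exact skn_jch_ne_one hn hi1 (add_left_cancel h).symm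
  · rw [skn_gcol_mk_nz hi hk0, hu] at h
    exact add_left_cancel h

/-- uniqueness of the distinguished colour in the star of `0` -/
lemma skn_zero_inj (hn : 5 ≤ n) {k : Fin n} (hk : k ≠ 0)
    (h : skn_gcol s((0:Fin n),k) = skn_gcol s((0:Fin n),1)) : k = 1 := by
  rw [skn_gcol_mk_z, skn_gcol_mk_z, if_neg (skn_one_ne_negone hn)] at h
  rcases eq_or_ne k (-1) with hk1 | hk1
  · rw [if_pos hk1] at h
    exact absurd (left_eq_add.1 h) (skn_one_ne_zero hn)
  · rw [if_neg hk1] at h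
    exact add_right_cancel h

end FinFacts

lemma skn_filter_card_one {α : Type*} [DecidableEq α] (s : Finset α) (p : α → Prop)
    [DecidablePred p] (u : α) (hu : u ∈ s) (hp : p u)
    (huniq : ∀ x ∈ s, p x → x = u) : (s.filter p).card = 1 := by
  rw [Finset.card_eq_one]
  refine ⟨u, Finset.eq_singleton_iff_unique_mem.2 ⟨Finset.mem_filter.2 ⟨hu, hp⟩, fun x hx => ?_⟩⟩
  exact huniq x (Finset.mem_filter.1 hx).1 (Finset.mem_filter.1 hx).2

lemma skn_exists_pcf (n : ℕ) (hn : 5 ≤ n) :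
    ∃ σ : Fin n ⊕ {e : Sym2 (Fin n) // ¬ e.IsDiag} → Fin n, IsPCF (subdividedKn n) σ := by
  haveI : NeZero n := ⟨by omega⟩
  refine ⟨Sum.elim id (fun e => skn_gcol e.val), ?_, ?_⟩
  · -- properness
    intro u v huv
    rcases u with i | e
    · obtain ⟨e, rfl, hie⟩ := skn_adj_inl.1 huv
      simp only [Sum.elim_inl, Sum.elim_inr, id]
      exact (skn_gcol_mem_ne hn e.prop hie).symm
    · obtain ⟨i, rfl, hie⟩ := skn_adj_inr.1 huv
      simp only [Sum.elim_inl, Sum.elim_inr, id]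
      exact skn_gcol_mem_ne hn e.prop hie
  · -- conflict-freeness
    intro v _
    rcases v with i | e
    · -- branch vertex
      rcases eq_or_ne i 0 with rfl | hi
      · -- the vertex 0
        have hd : ¬ (s((0:Fin n),(1:Fin n)) : Sym2 (Fin n)).IsDiag := by
          rw [Sym2.mk_isDiag_iff]
          exact fun h => skn_one_ne_zero hn h.symm
        refine ⟨Sum.inr ⟨s((0:Fin n),(1:Fin n)), hd⟩, ?_, ?_⟩
        · rw [SimpleGraph.mem_neighborFinset, skn_adj_inl]
          exact ⟨_, rfl, Sym2.mem_mk_left _ _⟩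
        · refine skn_filter_card_one _ _ _ ?_ rfl ?_
          · rw [SimpleGraph.mem_neighborFinset, skn_adj_inl]
            exact ⟨_, rfl, Sym2.mem_mk_left _ _⟩
          · intro x hx hcx
            rw [SimpleGraph.mem_neighborFinset, skn_adj_inl] at hx
            obtain ⟨⟨e, he⟩, rfl, hme⟩ := hx
            obtain ⟨k, rfl⟩ := Sym2.mem_iff_exists.1 hme
            have hk : k ≠ 0 := by
              rw [Sym2.mk_isDiag_iff] at he
              exact fun h => he h.symm
            simp only [Sum.elim_inr] at hcx
            have := skn_zero_inj hn hk hcx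
            subst this
            rfl
      · -- other branch vertices
        have hd : ¬ (s(i, skn_jch i) : Sym2 (Fin n)).IsDiag := by
          rw [Sym2.mk_isDiag_iff]
          exact fun h => skn_jch_ne hn i h.symm
        refine ⟨Sum.inr ⟨s(i, skn_jch i), hd⟩, ?_, ?_⟩
        · rw [SimpleGraph.mem_neighborFinset, skn_adj_inl]
          exact ⟨_, rfl, Sym2.mem_mk_left _ _⟩
        · refine skn_filter_card_one _ _ _ ?_ rfl ?_
          · rw [SimpleGraph.mem_neighborFinset, skn_adj_inl]
            exact ⟨_, rfl, Sym2.mem_mk_left _ _⟩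
          · intro x hx hcx
            rw [SimpleGraph.mem_neighborFinset, skn_adj_inl] at hx
            obtain ⟨⟨e, he⟩, rfl, hme⟩ := hx
            obtain ⟨k, rfl⟩ := Sym2.mem_iff_exists.1 hme
            have hk : k ≠ i := by
              rw [Sym2.mk_isDiag_iff] at he
              exact fun h => he h.symm
            simp only [Sum.elim_inr] at hcx
            have := skn_star_inj hn hi hk hcx
            subst this
            rfl
    · -- subdivision vertex
      obtain ⟨e, he⟩ := e
      induction e using Sym2.ind with
      | _ a b =>
        have hab : a ≠ b := by rwa [Sym2.mk_isDiag_iff] at he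
        refine ⟨Sum.inl a, ?_, ?_⟩
        · rw [skn_nbr_inr a b he]
          exact Finset.mem_insert_self _ _
        · rw [skn_nbr_inr a b he]
          refine skn_filter_card_one _ _ _ (Finset.mem_insert_self _ _) rfl ?_
          intro x hx hcx
          rcases Finset.mem_insert.1 hx with rfl | hx'
          · rfl
          · rw [Finset.mem_singleton.1 hx'] at hcx ⊢
            simp only [Sum.elim_inl, id] at hcx
            exact absurd hcx hab.symm

lemma skn_no_pcf (n : ℕ) (hn : 5 ≤ n) :
    ¬ ∃ σ : Fin n ⊕ {e : Sym2 (Fin n) // ¬ e.IsDiag} → Fin (n - 1),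
      IsPCF (subdividedKn n) σ := by
  rintro ⟨σ, hprop, hcf⟩
  have hinj : ∀ a b : Fin n, σ (Sum.inl a) = σ (Sum.inl b) → a = b := by
    intro a b hab
    by_contra hne
    have hd : ¬ (s(a,b) : Sym2 (Fin n)).IsDiag := by
      rw [Sym2.mk_isDiag_iff]; exact hne
    have hdeg : 0 < (subdividedKn n).degree (Sum.inr ⟨s(a,b), hd⟩) := by
      rw [skn_deg_inr]; omega
    obtain ⟨u, hu, hcard⟩ := hcf _ hdeg
    rw [skn_nbr_inr a b hd] at hu hcard
    have hσu : σ u = σ (Sum.inl a) := by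
      rcases Finset.mem_insert.1 hu with rfl | hu'
      · rfl
      · rw [Finset.mem_singleton.1 hu']; exact hab.symm
    have hfull : ({Sum.inl a, Sum.inl b} : Finset (Fin n ⊕ {e : Sym2 (Fin n) // ¬ e.IsDiag})).filter
        (fun w => σ w = σ u) = {Sum.inl a, Sum.inl b} := by
      refine Finset.filter_true_of_mem ?_
      intro x hx
      rcases Finset.mem_insert.1 hx with rfl | hx'
      · rw [hσu]
      · rw [Finset.mem_singleton.1 hx', hσu]; exact hab.symm
    rw [hfull, Finset.card_insert_of_notMem (by simp [hne]), Finset.card_singleton] at hcard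
    omega
  have hcard := Fintype.card_le_of_injective (fun i => σ (Sum.inl i))
    (fun a b h => hinj a b h)
  simp only [Fintype.card_fin] at hcard
  omega

theorem pcf_subdivided_complete (n : ℕ) (hn : 5 ≤ n) :
    (∃ σ : Fin n ⊕ {e : Sym2 (Fin n) // ¬ e.IsDiag} → Fin n,
        IsPCF (subdividedKn n) σ) ∧
    ¬ (∃ σ : Fin n ⊕ {e : Sym2 (Fin n) // ¬ e.IsDiag} → Fin (n - 1),
        IsPCF (subdividedKn n) σ) ∧
    (subdividedKn n).maxDegree = n - 1 ∧
    (subdividedKn n).chromaticNumber = 2 :=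
  ⟨skn_exists_pcf n hn, skn_no_pcf n hn, skn_maxdeg n hn, skn_chrom n hn⟩
end

section
/- Let G be a graph and σ a proper colouring of G. Suppose C ⊆ V(G) is an independent set such that for every vertex v with a designated set W(v) of witnesses of v in σ, if u ∈ W(v) and u ∈ C then N(v) ∩ C = {u}. Let σ' be obtained from σ by recolouring all vertices of C with a single fresh colour not used by σ. Then σ' is proper, and for every vertex v, every u ∈ W(v) remains a witness of v in σ'. -/
open Finset

theorem recolour_preserves_witnesses {V : Type*} [Fintype V] [DecidableEq V]
    (G : SimpleGraph V) [DecidableRel G.Adj] (σ : V → ℕ)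
    (hproper : ∀ u v, G.Adj u v → σ u ≠ σ v)
    (W : V → Finset V) (hW : ∀ v, W v ⊆ G.neighborFinset v)
    (hwit : ∀ v, ∀ u ∈ W v,
      ((G.neighborFinset v).filter (fun w => σ w = σ u)).card = 1)
    (C : Finset V) (hind : ∀ u ∈ C, ∀ w ∈ C, ¬ G.Adj u w)
    (hcond : ∀ v, ∀ u ∈ W v, u ∈ C → G.neighborFinset v ∩ C = {u})
    (c : ℕ) (hfresh : ∀ x, σ x ≠ c) :
    (∀ u v, G.Adj u v →
      (fun x => if x ∈ C then c else σ x) u ≠ (fun x => if x ∈ C then c else σ x) v) ∧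
    ∀ v, ∀ u ∈ W v,
      ((G.neighborFinset v).filter
        (fun w => (if w ∈ C then c else σ w) = (if u ∈ C then c else σ u))).card = 1 := by
  constructor
  · intro u v huv
    simp only []
    by_cases hu : u ∈ C <;> by_cases hv : v ∈ C <;> simp [hu, hv]
    · exact hind u hu v hv huv
    · exact fun h => hfresh v h.symm
    · exact hfresh u
    · exact hproper u v huv
  · intro v u hu
    by_cases huC : u ∈ C
    · have hkey := hcond v u hu huC
      have : (G.neighborFinset v).filter
          (fun w => (if w ∈ C then c else σ w) = (if u ∈ C then c else σ u)) =
          G.neighborFinset v ∩ C := by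
        ext w
        simp only [mem_filter, mem_inter, huC, if_pos]
        constructor
        · rintro ⟨hw, hcol⟩
          refine ⟨hw, ?_⟩
          by_contra hwC
          rw [if_neg hwC] at hcol
          exact hfresh w hcol
        · rintro ⟨hw, hwC⟩
          exact ⟨hw, by rw [if_pos hwC]⟩
      rw [this, hkey, card_singleton]
    · have h1 := hwit v u hu
      have huN : u ∈ G.neighborFinset v := hW v hu
      have huf : u ∈ (G.neighborFinset v).filter (fun w => σ w = σ u) := by
        simp [huN]
      have heq : (G.neighborFinset v).filter (fun w => σ w = σ u) = {u} :=
        Finset.eq_singleton_iff_unique_mem.mpr ⟨huf, fun x hx => by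
          rcases Finset.card_eq_one.mp h1 with ⟨a, ha⟩
          rw [ha] at hx huf
          rw [mem_singleton] at hx huf; rw [hx, huf]⟩
      have : (G.neighborFinset v).filter
          (fun w => (if w ∈ C then c else σ w) = (if u ∈ C then c else σ u)) = {u} := by
        ext w
        simp only [mem_filter, if_neg huC, mem_singleton]
        constructor
        · rintro ⟨hw, hcol⟩
          by_cases hwC : w ∈ C
          · rw [if_pos hwC] at hcol
            exact absurd hcol.symm (hfresh u)
          · rw [if_neg hwC] at hcol
            have : w ∈ (G.neighborFinset v).filter (fun w => σ w = σ u) := by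
              simp [hw, hcol]
            rwa [heq, mem_singleton] at this
        · rintro rfl
          exact ⟨huN, by rw [if_neg huC]⟩
      rw [this, card_singleton]
end
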